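/- Let a be a positive random variable with E[1/a] < ∞ and let Γ ≥ 0. Then (1 + cΓ) · E[1/(1+aΓ)] ≤ 1, where c = 1/E[1/a]. -/

import Mathlib

open MeasureTheory

lemma tangent_ineq (y m G : ℝ) (hy : 0 < y) (hm : 0 < m) (hG : 0 ≤ G) :
    y / (y + G) ≤ m / (m + G) + G / (m + G) ^ 2 * (y - m) := by
  have h1 : 0 < y + G := by linarith
  have h2 : 0 < m + G := by linarith
  have key : 0 ≤ G * (y - m) ^ 2 / ((y + G) * (m + G) ^ 2) := by positivity
  have expand : m / (m + G) + G / (m + G) ^ 2 * (y - m) - y / (y + G)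
      = G * (y - m) ^ 2 / ((y + G) * (m + G) ^ 2) := by
    field_simp
    ring
  linarith

theorem stmt_2 {Ω : Type*} [MeasurableSpace Ω] (μ : Measure Ω) [IsProbabilityMeasure μ]
    (a : Ω → ℝ) (ha_meas : Measurable a) (ha_pos : ∀ ω, 0 < a ω)
    (Γ : ℝ) (hΓ : 0 ≤ Γ)
    (h_int1 : Integrable (fun ω => 1 / a ω) μ)
    (h_int2 : Integrable (fun ω => 1 / (1 + a ω * Γ)) μ)
    (c : ℝ) (hc : c = 1 / ∫ ω, 1 / a ω ∂μ) :
    (1 + c * Γ) * ∫ ω, 1 / (1 + a ω * Γ) ∂μ ≤ 1 := by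
  set m := ∫ ω, 1 / a ω ∂μ with hm_def
  have hm : 0 < m := by
    refine (integral_pos_iff_support_of_nonneg
      (fun ω => (one_div_pos.2 (ha_pos ω)).le) h_int1).2 ?_
    have hsupp : (Function.support fun ω => 1 / a ω) = Set.univ :=
      Set.eq_univ_of_forall fun ω => (one_div_pos.2 (ha_pos ω)).ne'
    rw [hsupp]
    simp
  have hmG : 0 < m + Γ := by linarith
  -- pointwise bound
  have hpt : ∀ ω, 1 / (1 + a ω * Γ) ≤ m / (m + Γ) + Γ / (m + Γ) ^ 2 * (1 / a ω - m) := by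
    intro ω
    have haω := ha_pos ω
    have key := tangent_ineq (1 / a ω) m Γ (by positivity) hm hΓ
    have heq : (1 / a ω) / (1 / a ω + Γ) = 1 / (1 + a ω * Γ) := by
      have h3 : (0:ℝ) < 1 + a ω * Γ := by positivity
      have h4 : (0:ℝ) < 1 / a ω + Γ := by positivity
      field_simp
    rwa [heq] at key
  -- integrate
  have hI : ∫ ω, 1 / (1 + a ω * Γ) ∂μ ≤ m / (m + Γ) := by
    have hsub : Integrable (fun ω => 1 / a ω - m) μ := h_int1.sub (integrable_const m)
    have hmul : Integrable (fun ω => Γ / (m + Γ) ^ 2 * (1 / a ω - m)) μ := hsub.const_mul _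
    have hint_rhs : Integrable (fun ω => m / (m + Γ) + Γ / (m + Γ) ^ 2 * (1 / a ω - m)) μ :=
      (integrable_const _).add hmul
    have := integral_mono h_int2 hint_rhs hpt
    calc ∫ ω, 1 / (1 + a ω * Γ) ∂μ
        ≤ ∫ ω, (m / (m + Γ) + Γ / (m + Γ) ^ 2 * (1 / a ω - m)) ∂μ := this
      _ = m / (m + Γ) := by
          rw [integral_add (integrable_const _) hmul]
          rw [integral_const_mul]
          rw [integral_sub h_int1 (integrable_const m), integral_const, integral_const]
          simp only [measure_univ, probReal_univ, ENNReal.toReal_one, smul_eq_mul, one_mul, ← hm_def]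
          ring
  have hc' : 1 + c * Γ = (m + Γ) / m := by
    rw [hc]; field_simp
  have hInn : 0 < 1 + c * Γ := by rw [hc']; positivity
  calc (1 + c * Γ) * ∫ ω, 1 / (1 + a ω * Γ) ∂μ
      ≤ (1 + c * Γ) * (m / (m + Γ)) := by
        exact mul_le_mul_of_nonneg_left hI (le_of_lt hInn)
    _ = 1 := by rw [hc']; field_simp
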